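/- Let q ≥ 2. Every commutative subgroup K of the generalized quaternion group Q_{2^{q+1}} ⊆ SU(2) is either contained in μ_{2^q}, or is contained in the set {I, −I, wx, −wx} for some x ∈ μ_{2^q}. -/

import Mathlib

open Matrix Complex

noncomputable section

abbrev SU2 := Matrix.specialUnitaryGroup (Fin 2) ℂ

instance SU2.instGroup : Group SU2 :=
  { (inferInstance : Monoid SU2) with
    inv := fun A => ⟨star A.1, by
      rcases A.2 with ⟨hu, hd⟩
      refine ⟨⟨?_, ?_⟩, ?_⟩
      · simpa using hu.2
      · simpa using hu.1
      · show (star A.1).det = 1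
        rw [Matrix.star_eq_conjTranspose, Matrix.det_conjTranspose]
        simp [show A.1.det = 1 from hd]⟩
    inv_mul_cancel := fun A => Subtype.ext A.2.1.1 }

lemma w_mem : !![(0:ℂ), -1; 1, 0] ∈ Matrix.specialUnitaryGroup (Fin 2) ℂ := by
  rw [Matrix.mem_specialUnitaryGroup_iff, Matrix.mem_unitaryGroup_iff]
  constructor
  · ext i j
    fin_cases i <;> fin_cases j <;>
      simp [Matrix.mul_apply, Fin.sum_univ_two, Matrix.star_apply, Complex.star_def]
  · simp [Matrix.det_fin_two]

def w : SU2 := ⟨!![(0:ℂ), -1; 1, 0], w_mem⟩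

lemma xi_conj (m : ℕ) : (starRingEnd ℂ) (2 * Real.pi * Complex.I / m) =
    -(2 * Real.pi * Complex.I / m) := by
  simp [map_div₀, Complex.conj_I, Complex.conj_ofReal, map_ofNat]
  ring

lemma xi_conj_exp (m : ℕ) : (starRingEnd ℂ) (Complex.exp (2 * Real.pi * Complex.I / m)) =
    Complex.exp (-(2 * Real.pi * Complex.I / m)) := by
  rw [← Complex.exp_conj, xi_conj]

lemma xi_conj_exp' (m : ℕ) : (starRingEnd ℂ) (Complex.exp (-(2 * Real.pi * Complex.I / m))) =
    Complex.exp (2 * Real.pi * Complex.I / m) := by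
  rw [← Complex.exp_conj, map_neg, xi_conj, neg_neg]

lemma xi_mem (m : ℕ) :
    !![Complex.exp (2 * Real.pi * Complex.I / m), 0; 0,
       Complex.exp (-(2 * Real.pi * Complex.I / m))]
      ∈ Matrix.specialUnitaryGroup (Fin 2) ℂ := by
  rw [Matrix.mem_specialUnitaryGroup_iff, Matrix.mem_unitaryGroup_iff]
  have hstar : star (!![Complex.exp (2 * Real.pi * Complex.I / m), 0; 0,
       Complex.exp (-(2 * Real.pi * Complex.I / m))]) =
      !![Complex.exp (-(2 * Real.pi * Complex.I / m)), 0; 0,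
       Complex.exp (2 * Real.pi * Complex.I / m)] := by
    ext i j
    fin_cases i <;> fin_cases j <;>
      simp [Matrix.star_apply, Complex.star_def, xi_conj_exp m, xi_conj_exp' m]
  constructor
  · rw [hstar]
    ext i j
    fin_cases i <;> fin_cases j <;>
      simp [Matrix.mul_apply, Fin.sum_univ_two, ← Complex.exp_add]
  · simp [Matrix.det_fin_two, ← Complex.exp_add]

def ξ (m : ℕ) : SU2 :=
  ⟨!![Complex.exp (2 * Real.pi * Complex.I / m), 0; 0,
      Complex.exp (-(2 * Real.pi * Complex.I / m))], xi_mem m⟩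

/-- `μ m` : the cyclic subgroup of `SU2` generated by `ξ m`. -/
def μ (m : ℕ) : Subgroup SU2 := Subgroup.zpowers (ξ m)

/-- `genQ q` is the generalized quaternion group `Q_{2^{q+1}} ⊆ SU2`,
generated by `ξ_{2^q}` and `w`. -/
def genQ (q : ℕ) : Subgroup SU2 := Subgroup.closure {ξ (2 ^ q), w}

/-- Lower central series of a subgroup, as subgroups of the ambient group:
`lcs H k = Γ^{k+1}(H)`, so `lcs H 0 = Γ¹(H) = H` and `lcs H (k+1) = ⁅lcs H k, H⁆`. -/
def lcs {G : Type*} [Group G] (H : Subgroup G) : ℕ → Subgroup G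
  | 0 => H
  | (k + 1) => ⁅lcs H k, H⁆

/-- The set of diagonal matrices in `SU2`: the maximal torus `T`. -/
def Tset : Set SU2 :=
  {x | (x : Matrix (Fin 2) (Fin 2) ℂ) 0 1 = 0 ∧ (x : Matrix (Fin 2) (Fin 2) ℂ) 1 0 = 0}

/-- The set of anti-diagonal matrices in `SU2`: the coset `wT`. -/
def wTset : Set SU2 :=
  {x | (x : Matrix (Fin 2) (Fin 2) ℂ) 0 0 = 0 ∧ (x : Matrix (Fin 2) (Fin 2) ℂ) 1 1 = 0}

/-- `PU(2)`, the quotient of `SU(2)` by its center `{±I}`. -/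
abbrev PU2 := SU2 ⧸ Subgroup.center SU2


-- ===== aux =====
namespace Stmt8Aux

lemma coe_mul (x y : SU2) : ((x * y : SU2) : Matrix (Fin 2) (Fin 2) ℂ) = x.1 * y.1 := rfl
lemma coe_inv (x : SU2) : ((x⁻¹ : SU2) : Matrix (Fin 2) (Fin 2) ℂ) = star x.1 := rfl
lemma coe_one : ((1 : SU2) : Matrix (Fin 2) (Fin 2) ℂ) = 1 := rfl
lemma coe_pow (x : SU2) (n : ℕ) : ((x ^ n : SU2) : Matrix (Fin 2) (Fin 2) ℂ) = x.1 ^ n :=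
  SubmonoidClass.coe_pow x n

lemma det_coe (x : SU2) : (x.1).det = 1 := (Matrix.mem_specialUnitaryGroup_iff.mp x.2).2

def Dgrp : Subgroup SU2 where
  carrier := {x | x.1 0 1 = 0 ∧ x.1 1 0 = 0 ∧ x.1 1 1 = (starRingEnd ℂ) (x.1 0 0)}
  one_mem' := by simp [coe_one, Matrix.one_apply]
  mul_mem' := by
    rintro x y ⟨hx1, hx2, hx3⟩ ⟨hy1, hy2, hy3⟩
    refine ⟨?_, ?_, ?_⟩ <;>
      simp [coe_mul, Matrix.mul_apply, Fin.sum_univ_two, hx1, hx2, hx3, hy1, hy2, hy3, mul_comm]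
  inv_mem' := by
    rintro x ⟨hx1, hx2, hx3⟩
    refine ⟨?_, ?_, ?_⟩ <;>
      simp [coe_inv, Matrix.star_apply, hx1, hx2, hx3]

lemma mu_le_D (m : ℕ) : μ m ≤ Dgrp := by
  rw [μ, Subgroup.zpowers_le]
  exact ⟨by simp [ξ], by simp [ξ], by simp [ξ, xi_conj_exp]⟩

lemma anti (x : SU2) (h0 : x.1 0 0 = 0) (h1 : x.1 1 1 = 0) :
    x.1 0 1 * (starRingEnd ℂ) (x.1 0 1) = 1 ∧ x.1 1 0 = -(starRingEnd ℂ) (x.1 0 1) := by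
  have hu : x.1 * star x.1 = 1 := Matrix.mem_unitaryGroup_iff.mp x.2.1
  have h00 := congrFun (congrFun hu 0) 0
  simp [Matrix.mul_apply, Fin.sum_univ_two, Matrix.star_apply, Matrix.one_apply, h0,
    Complex.star_def] at h00
  have hdet := det_coe x
  rw [Matrix.det_fin_two, h0, h1] at hdet
  refine ⟨h00, ?_⟩
  have : x.1 1 0 * (x.1 0 1 * (starRingEnd ℂ) (x.1 0 1)) = x.1 1 0 := by rw [h00, mul_one]
  linear_combination -((starRingEnd ℂ) (x.1 0 1)) * hdet - this

lemma xi_mul_w (m : ℕ) : ξ m * w = w * (ξ m)⁻¹ := by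
  apply Subtype.ext
  rw [coe_mul, coe_mul, coe_inv]
  ext i j
  fin_cases i <;> fin_cases j <;>
    simp [ξ, w, Matrix.mul_apply, Fin.sum_univ_two, Matrix.star_apply, Complex.star_def,
      xi_conj_exp, xi_conj_exp']

lemma w_conj_xi (m : ℕ) : w⁻¹ * ξ m * w = (ξ m)⁻¹ := by
  rw [mul_assoc, xi_mul_w, ← mul_assoc, inv_mul_cancel, one_mul]

lemma conj_mem (m : ℕ) {d : SU2} (hd : d ∈ μ m) : w⁻¹ * d * w ∈ μ m := by
  obtain ⟨n, rfl⟩ := Subgroup.mem_zpowers_iff.mp hd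
  have h := map_zpow (MulAut.conj w⁻¹) (ξ m) n
  simp only [MulAut.conj_apply, inv_inv] at h
  rw [h, w_conj_xi]
  exact Subgroup.zpow_mem _ (inv_mem (Subgroup.mem_zpowers _)) n

lemma pow_diag (a b : ℂ) : ∀ n : ℕ, (!![a, 0; 0, b]) ^ n = !![a ^ n, 0; 0, b ^ n]
  | 0 => by
    ext i j
    fin_cases i <;> fin_cases j <;> simp [Matrix.one_apply]
  | n + 1 => by
    rw [pow_succ, pow_diag a b n]
    ext i j
    fin_cases i <;> fin_cases j <;> simp [Matrix.mul_apply, Fin.sum_univ_two, pow_succ]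

lemma ww_eq (q : ℕ) (hq : 1 ≤ q) : w * w = ξ (2 ^ q) ^ 2 ^ (q - 1) := by
  have h2 : (2 : ℂ) ^ (q - 1) ≠ 0 := pow_ne_zero _ two_ne_zero
  have hq2 : (2 : ℂ) ^ q = 2 ^ (q - 1) * 2 := by
    rw [← pow_succ]; congr 1; omega
  have hgoal : ((2 ^ (q - 1) : ℕ) : ℂ) * (2 * Real.pi * Complex.I / ((2 ^ q : ℕ) : ℂ)) =
      Real.pi * Complex.I := by
    have h2q : (2 : ℂ) ^ q ≠ 0 := pow_ne_zero _ two_ne_zero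
    push_cast
    field_simp
    rw [hq2]
  have ha : Complex.exp (2 * Real.pi * Complex.I / ((2 ^ q : ℕ) : ℂ)) ^ 2 ^ (q - 1) = -1 := by
    rw [← Complex.exp_nat_mul, hgoal, Complex.exp_pi_mul_I]
  have hb : Complex.exp (-(2 * Real.pi * Complex.I / ((2 ^ q : ℕ) : ℂ))) ^ 2 ^ (q - 1) = -1 := by
    rw [Complex.exp_neg, inv_pow, ha]
    norm_num
  apply Subtype.ext
  rw [coe_mul, coe_pow]
  show w.1 * w.1 = (!![Complex.exp (2 * Real.pi * Complex.I / ((2 ^ q : ℕ) : ℂ)), 0; 0,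
      Complex.exp (-(2 * Real.pi * Complex.I / ((2 ^ q : ℕ) : ℂ)))]) ^ 2 ^ (q - 1)
  rw [pow_diag, ha, hb]
  ext i j
  fin_cases i <;> fin_cases j <;> simp [w, Matrix.mul_apply, Fin.sum_univ_two]

lemma negone_mem (q : ℕ) (hq : 1 ≤ q) : w * w ∈ μ (2 ^ q) := by
  rw [ww_eq q hq]
  exact pow_mem (Subgroup.mem_zpowers _) _

lemma genQ_struct (q : ℕ) (hq : 1 ≤ q) :
    ∀ k ∈ genQ q, k ∈ μ (2 ^ q) ∨ ∃ y ∈ μ (2 ^ q), k = w * y := by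
  intro k hk
  refine Subgroup.closure_induction
    (p := fun g _ => g ∈ μ (2 ^ q) ∨ ∃ y ∈ μ (2 ^ q), g = w * y) ?_ ?_ ?_ ?_ hk
  · intro x hx
    rcases hx with h | h
    · exact Or.inl (h ▸ Subgroup.mem_zpowers _)
    · exact Or.inr ⟨1, one_mem _, by rw [Set.mem_singleton_iff.mp h, mul_one]⟩
  · exact Or.inl (one_mem _)
  · rintro x y hx' hy' (hx | ⟨z, hz, rfl⟩) (hy | ⟨u, hu, rfl⟩)
    · exact Or.inl (mul_mem hx hy)
    · exact Or.inr ⟨(w⁻¹ * x * w) * u, mul_mem (conj_mem _ hx) hu, by group⟩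
    · exact Or.inr ⟨z * y, mul_mem hz hy, by group⟩
    · refine Or.inl ?_
      have : (w * z) * (w * u) = (w * w) * ((w⁻¹ * z * w) * u) := by group
      rw [this]
      exact mul_mem (negone_mem q hq) (mul_mem (conj_mem _ hz) hu)
  · rintro x hx' (hx | ⟨z, hz, rfl⟩)
    · exact Or.inl (inv_mem hx)
    · exact Or.inr ⟨(w⁻¹ * z⁻¹ * w) * (w * w)⁻¹,
        mul_mem (conj_mem _ (inv_mem hz)) (inv_mem (negone_mem q hq)), by group⟩

end Stmt8Aux

/-- For `q ≥ 2`, every commutative subgroup of `Q_{2^{q+1}}` is contained in `μ_{2^q}` or in a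
set `{I, -I, wx, -wx}` with `x ∈ μ_{2^q}`. -/
theorem stmt8 (q : ℕ) (hq : 2 ≤ q) (K : Subgroup SU2) (hK : K ≤ genQ q)
    (hc : IsMulCommutative K) :
    K ≤ μ (2 ^ q) ∨
      ∃ x ∈ μ (2 ^ q), (K : Set SU2) ⊆
        {k : SU2 | (k : Matrix (Fin 2) (Fin 2) ℂ) = 1 ∨
          (k : Matrix (Fin 2) (Fin 2) ℂ) = -1 ∨
          (k : Matrix (Fin 2) (Fin 2) ℂ) = ((w * x : SU2) : Matrix (Fin 2) (Fin 2) ℂ) ∨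
          (k : Matrix (Fin 2) (Fin 2) ℂ) = -((w * x : SU2) : Matrix (Fin 2) (Fin 2) ℂ)} := by
  classical
  by_cases hKμ : K ≤ μ (2 ^ q)
  · exact Or.inl hKμ
  right
  haveI := hc
  obtain ⟨a, haK, haμ⟩ := SetLike.not_le_iff_exists.mp hKμ
  rcases Stmt8Aux.genQ_struct q (by omega) a (hK haK) with h | ⟨x, hx, hax⟩
  · exact absurd h haμ
  refine ⟨x, hx, ?_⟩
  have hxD := Stmt8Aux.mu_le_D _ hx
  have ha00 : a.1 0 0 = 0 := by
    rw [hax, Stmt8Aux.coe_mul]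
    simp [w, Matrix.mul_apply, Fin.sum_univ_two, hxD.2.1]
  have ha11 : a.1 1 1 = 0 := by
    rw [hax, Stmt8Aux.coe_mul]
    simp [w, Matrix.mul_apply, Fin.sum_univ_two, hxD.1]
  obtain ⟨ha1, ha2⟩ := Stmt8Aux.anti a ha00 ha11
  have ha01 : a.1 0 1 ≠ 0 := left_ne_zero_of_mul_eq_one ha1
  intro k hkK
  have hcomm : a * k = k * a := Subgroup.mul_comm_of_mem_isMulCommutative K haK (by exact hkK)
  have hM : a.1 * k.1 = k.1 * a.1 := by
    rw [← Stmt8Aux.coe_mul, ← Stmt8Aux.coe_mul, hcomm]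
  simp only [Set.mem_setOf_eq]
  rcases Stmt8Aux.genQ_struct q (by omega) k (hK hkK) with hkμ | ⟨y, hy, hky⟩
  · obtain ⟨hk01, hk10, hk11⟩ := Stmt8Aux.mu_le_D _ hkμ
    have h01 := congrFun (congrFun hM 0) 1
    simp only [Matrix.mul_apply, Fin.sum_univ_two, ha00, ha11, hk01, zero_mul, mul_zero,
      add_zero, zero_add] at h01
    -- h01 : a01 * k11 = k00 * a01
    have hkk : k.1 1 1 = k.1 0 0 := by
      apply mul_left_cancel₀ ha01
      rw [h01, mul_comm]
    have hdet := Stmt8Aux.det_coe k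
    rw [Matrix.det_fin_two, hk01, hkk] at hdet
    have hk00 : k.1 0 0 * k.1 0 0 = 1 := by linear_combination hdet
    rcases mul_self_eq_one_iff.mp hk00 with h1 | h1
    · refine Or.inl ?_
      ext i j
      fin_cases i <;> fin_cases j <;>
        simp [hk01, hk10, hk11, h1, Matrix.one_apply]
    · refine Or.inr (Or.inl ?_)
      ext i j
      fin_cases i <;> fin_cases j <;>
        simp [hk01, hk10, hk11, h1, Matrix.one_apply]
  · have hyD := Stmt8Aux.mu_le_D _ hy
    have hk00 : k.1 0 0 = 0 := by
      rw [hky, Stmt8Aux.coe_mul]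
      simp [w, Matrix.mul_apply, Fin.sum_univ_two, hyD.2.1]
    have hk11 : k.1 1 1 = 0 := by
      rw [hky, Stmt8Aux.coe_mul]
      simp [w, Matrix.mul_apply, Fin.sum_univ_two, hyD.1]
    obtain ⟨hk1, hk2⟩ := Stmt8Aux.anti k hk00 hk11
    have h00 := congrFun (congrFun hM 0) 0
    simp only [Matrix.mul_apply, Fin.sum_univ_two, ha00, hk00, zero_mul, mul_zero,
      add_zero, zero_add] at h00
    -- h00 : a01 * k10 = k01 * a10
    rw [ha2, hk2] at h00
    have heq : a.1 0 1 * (starRingEnd ℂ) (k.1 0 1) =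
        k.1 0 1 * (starRingEnd ℂ) (a.1 0 1) := by linear_combination -h00
    have hr : ((starRingEnd ℂ) (a.1 0 1) * k.1 0 1) *
        ((starRingEnd ℂ) (a.1 0 1) * k.1 0 1) = 1 := by
      linear_combination (-(starRingEnd ℂ) (a.1 0 1) * k.1 0 1) * heq +
        (k.1 0 1 * (starRingEnd ℂ) (k.1 0 1)) * ha1 + hk1
    rcases mul_self_eq_one_iff.mp hr with hr1 | hr1
    · have hk01a : k.1 0 1 = a.1 0 1 := by
        linear_combination a.1 0 1 * hr1 - k.1 0 1 * ha1
      refine Or.inr (Or.inr (Or.inl ?_))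
      rw [← hax]
      ext i j
      fin_cases i <;> fin_cases j <;>
        simp [hk00, ha00, hk01a, hk2, ha2, hk11, ha11]
    · have hk01a : k.1 0 1 = -a.1 0 1 := by
        linear_combination a.1 0 1 * hr1 - k.1 0 1 * ha1
      refine Or.inr (Or.inr (Or.inr ?_))
      rw [← hax]
      ext i j
      fin_cases i <;> fin_cases j <;>
        simp [Matrix.neg_apply, hk00, ha00, hk01a, hk2, ha2, hk11, ha11]
end
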